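/- In the SDIRK3 setting (2-stage DIRK with a₁₁ = a₂₂ = γ > 0, a₂₁ = 1 - 2γ, f contractive), the second-stage error satisfies ‖z⁽²⁾ - y⁽²⁾‖ ≤ (1 + 2·|a₂₁|/a₁₁)·‖zₙ - yₙ‖ + Δt·(2·|a₂₁|·ε₁ + a₂₂·ε₂), where ε₁, ε₂ bound the stage perturbations. -/

import Mathlib

open scoped RealInnerProductSpace

private lemma contractive_proj {H : Type*} [NormedAddCommGroup H] [InnerProductSpace ℝ H]
    (f : H → H) (hf : ∀ x y : H, ⟪x - y, f x - f y⟫ ≤ 0)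
    (δ : ℝ) (hδ : 0 ≤ δ) (z y : H) :
    ‖z - y‖ ≤ ‖(z - y) - δ • (f z - f y)‖ := by
  have hsq : ‖(z - y) - δ • (f z - f y)‖ ^ 2
      = ‖z - y‖ ^ 2 - 2 * (δ * ⟪z - y, f z - f y⟫) + ‖δ • (f z - f y)‖ ^ 2 := by
    rw [@norm_sub_sq_real, real_inner_smul_right]
  have h1 := hf z y
  have h2 : (0:ℝ) ≤ ‖δ • (f z - f y)‖ ^ 2 := sq_nonneg _
  nlinarith [norm_nonneg (z - y), norm_nonneg ((z - y) - δ • (f z - f y)),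
    mul_nonneg hδ (neg_nonneg.mpr h1)]

theorem sdirk3_second_stage_error_bound
    {H : Type*} [NormedAddCommGroup H] [InnerProductSpace ℝ H]
    (f fε : H → H) (hf : ∀ x y : H, ⟪x - y, f x - f y⟫ ≤ 0)
    (γ Δt ε₁ ε₂ : ℝ) (hγ : 0 < γ) (hΔt : 0 < Δt)
    (zn yn z1 z2 y1 y2 : H)
    (hz1 : z1 = zn + (γ * Δt) • f z1)
    (hz2 : z2 = zn + ((1 - 2 * γ) * Δt) • f z1 + (γ * Δt) • f z2)
    (hy1 : y1 = yn + (γ * Δt) • fε y1)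
    (hy2 : y2 = yn + ((1 - 2 * γ) * Δt) • f y1 + (γ * Δt) • fε y2)
    (hε1 : ‖f y1 - fε y1‖ ≤ ε₁)
    (hε2 : ‖f y2 - fε y2‖ ≤ ε₂) :
    ‖z2 - y2‖ ≤ (1 + 2 * |1 - 2 * γ| / γ) * ‖zn - yn‖ +
      Δt * (2 * |1 - 2 * γ| * ε₁ + γ * ε₂) := by
  set s : ℝ := γ * Δt with hs
  have hspos : 0 < s := mul_pos hγ hΔt
  -- key identities (treat f z1 etc. as atoms)
  have key1 : (z1 - y1) - s • (f z1 - f y1) = (zn - yn) + s • (f y1 - fε y1) := by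
    set Fz1 := f z1; set Fy1 := f y1; set Gy1 := fε y1
    rw [hz1, hy1]; module
  have key1' : s • (f z1 - f y1) = ((z1 - y1) - (zn - yn)) + s • (fε y1 - f y1) := by
    set Fz1 := f z1; set Fy1 := f y1; set Gy1 := fε y1
    rw [hz1, hy1]; module
  have key2 : (z2 - y2) - s • (f z2 - f y2)
      = (zn - yn) + ((1 - 2 * γ) * Δt) • (f z1 - f y1) + s • (f y2 - fε y2) := by
    set Fz1 := f z1; set Fy1 := f y1; set Fz2 := f z2; set Fy2 := f y2; set Gy2 := fε y2
    rw [hz2, hy2]; module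
  -- stage 1 bound
  have b1 : ‖z1 - y1‖ ≤ ‖zn - yn‖ + s * ε₁ := by
    calc ‖z1 - y1‖ ≤ ‖(z1 - y1) - s • (f z1 - f y1)‖ :=
          contractive_proj f hf s hspos.le z1 y1
      _ = ‖(zn - yn) + s • (f y1 - fε y1)‖ := by rw [key1]
      _ ≤ ‖zn - yn‖ + ‖s • (f y1 - fε y1)‖ := norm_add_le _ _
      _ ≤ ‖zn - yn‖ + s * ε₁ := by
          rw [norm_smul, Real.norm_eq_abs, abs_of_pos hspos]
          exact add_le_add_right (mul_le_mul_of_nonneg_left hε1 hspos.le) _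
  -- bound on s * ‖f z1 - f y1‖
  have bsc : s * ‖f z1 - f y1‖ ≤ 2 * ‖zn - yn‖ + 2 * s * ε₁ := by
    have := calc ‖s • (f z1 - f y1)‖
        = ‖((z1 - y1) - (zn - yn)) + s • (fε y1 - f y1)‖ := by rw [key1']
      _ ≤ ‖(z1 - y1) - (zn - yn)‖ + ‖s • (fε y1 - f y1)‖ := norm_add_le _ _
      _ ≤ (‖z1 - y1‖ + ‖zn - yn‖) + s * ε₁ := by
          gcongr
          · exact norm_sub_le _ _
          · rw [norm_smul, Real.norm_eq_abs, abs_of_pos hspos, ← norm_neg, neg_sub]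
            exact mul_le_mul_of_nonneg_left hε1 hspos.le
    rw [norm_smul, Real.norm_eq_abs, abs_of_pos hspos] at this
    linarith
  -- stage 2 bound
  have b2 : ‖z2 - y2‖ ≤ ‖zn - yn‖ + |1 - 2 * γ| * Δt * ‖f z1 - f y1‖ + s * ε₂ := by
    calc ‖z2 - y2‖ ≤ ‖(z2 - y2) - s • (f z2 - f y2)‖ :=
          contractive_proj f hf s hspos.le z2 y2
      _ = ‖(zn - yn) + ((1 - 2 * γ) * Δt) • (f z1 - f y1) + s • (f y2 - fε y2)‖ := by
          rw [key2]
      _ ≤ ‖zn - yn‖ + ‖((1 - 2 * γ) * Δt) • (f z1 - f y1)‖ + ‖s • (f y2 - fε y2)‖ := by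
          exact le_trans (norm_add_le _ _) (by gcongr; exact norm_add_le _ _)
      _ ≤ ‖zn - yn‖ + |1 - 2 * γ| * Δt * ‖f z1 - f y1‖ + s * ε₂ := by
          rw [norm_smul, norm_smul, Real.norm_eq_abs, Real.norm_eq_abs,
            abs_of_pos hspos, abs_mul, abs_of_pos hΔt]
          gcongr
  -- final arithmetic
  have hε2' : 0 ≤ ε₂ := le_trans (norm_nonneg _) hε2
  have hc : 0 ≤ ‖f z1 - f y1‖ := norm_nonneg _
  have habs : 0 ≤ |1 - 2 * γ| := abs_nonneg _
  have hmul : |1 - 2 * γ| * Δt * ‖f z1 - f y1‖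
      ≤ (|1 - 2 * γ| / γ) * (2 * ‖zn - yn‖ + 2 * s * ε₁) := by
    have : |1 - 2 * γ| * Δt * ‖f z1 - f y1‖ = (|1 - 2 * γ| / γ) * (s * ‖f z1 - f y1‖) := by
      field_simp [hs]; ring
    rw [this]
    exact mul_le_mul_of_nonneg_left bsc (by positivity)
  have hfinal : (|1 - 2 * γ| / γ) * (2 * ‖zn - yn‖ + 2 * s * ε₁)
      = 2 * |1 - 2 * γ| / γ * ‖zn - yn‖ + Δt * (2 * |1 - 2 * γ| * ε₁) := by
    field_simp [hs]; ring
  have : ‖z2 - y2‖ ≤ ‖zn - yn‖ + (2 * |1 - 2 * γ| / γ * ‖zn - yn‖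
      + Δt * (2 * |1 - 2 * γ| * ε₁)) + s * ε₂ := by
    calc ‖z2 - y2‖ ≤ ‖zn - yn‖ + |1 - 2 * γ| * Δt * ‖f z1 - f y1‖ + s * ε₂ := b2
      _ ≤ _ := by rw [← hfinal]; gcongr
  calc ‖z2 - y2‖ ≤ _ := this
    _ = (1 + 2 * |1 - 2 * γ| / γ) * ‖zn - yn‖ + Δt * (2 * |1 - 2 * γ| * ε₁ + γ * ε₂) := by
        rw [hs]; ring
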